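/- Suppose each f_i is L-smooth (possibly non-convex), client i performs τ_i ≥ 1 local FedLin steps per round with step size η_i = 1/(26Lτ_i), and there is no compression. Then after T rounds, min_{1 ≤ t ≤ T} ‖∇f(x̄_t)‖² ≤ (52L/T)(f(x̄₁) - f(x̄_{T+1})), where f = (1/m)∑f_i. -/

import Mathlib

open Finset

section FedLinHelpers

open InnerProductSpace

variable {E : Type*} [NormedAddCommGroup E] [InnerProductSpace ℝ E] [CompleteSpace E]

lemma fed_grad_fderiv (φ : E → ℝ) (z : E) :
    fderiv ℝ φ z = toDual ℝ E (gradient φ z) := by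
  rw [gradient]
  exact ((toDual ℝ E).apply_symm_apply _).symm

lemma fed_descent {φ : E → ℝ} (hφ : Differentiable ℝ φ) {L : ℝ} (hL : 0 ≤ L)
    (hlip : ∀ a b, ‖gradient φ a - gradient φ b‖ ≤ L * ‖a - b‖) (x y : E) :
    φ y ≤ φ x + ⟪gradient φ x, y - x⟫_ℝ + L * ‖y - x‖ ^ 2 := by
  set c := gradient φ x with hc
  have hfun : ⇑(toDual ℝ E c) = fun w => (⟪c, w⟫_ℝ) := by
    ext w; simp [InnerProductSpace.toDual_apply_apply]
  have hg : ∀ z : E, HasFDerivAt (fun w => φ w - ⟪c, w⟫_ℝ)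
      (toDual ℝ E (gradient φ z) - toDual ℝ E c) z := by
    intro z
    have h1 : HasFDerivAt φ (toDual ℝ E (gradient φ z)) z := by
      rw [← fed_grad_fderiv]; exact (hφ z).hasFDerivAt
    have h2 : HasFDerivAt (fun w => (⟪c, w⟫_ℝ)) (toDual ℝ E c) z := by
      rw [← hfun]; exact (toDual ℝ E c).hasFDerivAt
    exact h1.sub h2
  have hseg : ∀ z ∈ segment ℝ x y, ‖z - x‖ ≤ ‖y - x‖ := by
    rintro z ⟨a, b, ha, hb, hab, rfl⟩
    have hz : a • x + b • y - x = b • (y - x) := by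
      have : a = 1 - b := by linarith
      rw [this]; module
    rw [hz, norm_smul, Real.norm_eq_abs, abs_of_nonneg hb]
    nlinarith [norm_nonneg (y - x)]
  have hbound : ∀ z ∈ segment ℝ x y,
      ‖toDual ℝ E (gradient φ z) - toDual ℝ E c‖ ≤ L * ‖y - x‖ := by
    intro z hz
    rw [← map_sub, (toDual ℝ E).norm_map]
    calc ‖gradient φ z - c‖ ≤ L * ‖z - x‖ := hlip z x
      _ ≤ L * ‖y - x‖ := mul_le_mul_of_nonneg_left (hseg z hz) hL
  have key := (convex_segment x y).norm_image_sub_le_of_norm_hasFDerivWithin_le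
    (fun z hz => (hg z).hasFDerivWithinAt) hbound
    (left_mem_segment ℝ x y) (right_mem_segment ℝ x y)
  have h3 : ⟪c, y⟫_ℝ - ⟪c, x⟫_ℝ = ⟪c, y - x⟫_ℝ := (inner_sub_right c y x).symm
  have h4 : φ y - ⟪c, y⟫_ℝ - (φ x - ⟪c, x⟫_ℝ) ≤ L * ‖y - x‖ * ‖y - x‖ := by
    calc φ y - ⟪c, y⟫_ℝ - (φ x - ⟪c, x⟫_ℝ) ≤ ‖φ y - ⟪c, y⟫_ℝ - (φ x - ⟪c, x⟫_ℝ)‖ :=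
        le_abs_self _
      _ ≤ L * ‖y - x‖ * ‖y - x‖ := key
  nlinarith [h4, h3, sq_abs (‖y - x‖)]

lemma fed_gradF {d m : ℕ} (f : Fin m → EuclideanSpace ℝ (Fin d) → ℝ)
    (F : EuclideanSpace ℝ (Fin d) → ℝ)
    (hF : ∀ z, F z = (1 / (m : ℝ)) * ∑ i, f i z)
    (hdiff : ∀ i, Differentiable ℝ (f i)) (z : EuclideanSpace ℝ (Fin d)) :
    HasGradientAt F ((1 / (m : ℝ)) • ∑ i, gradient (f i) z) z := by
  have h1 : HasFDerivAt (fun w => ∑ i, f i w)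
      (∑ i, toDual ℝ _ (gradient (f i) z)) z :=
    HasFDerivAt.fun_sum (fun i _ => by
      rw [← fed_grad_fderiv]; exact (hdiff i z).hasFDerivAt)
  have h2 := h1.const_mul ((1 : ℝ) / m)
  have hFe : F = fun w => (1 / (m : ℝ)) * ∑ i, f i w := funext hF
  rw [hasGradientAt_iff_hasFDerivAt, map_smul, map_sum, hFe]
  exact h2

lemma fed_gradF_eq {d m : ℕ} (f : Fin m → EuclideanSpace ℝ (Fin d) → ℝ)
    (F : EuclideanSpace ℝ (Fin d) → ℝ)
    (hF : ∀ z, F z = (1 / (m : ℝ)) * ∑ i, f i z)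
    (hdiff : ∀ i, Differentiable ℝ (f i)) (z : EuclideanSpace ℝ (Fin d)) :
    gradient F z = (1 / (m : ℝ)) • ∑ i, gradient (f i) z :=
  (fed_gradF f F hF hdiff z).gradient

lemma fed_gradF_lip {d m : ℕ} (hm : 0 < m) (f : Fin m → EuclideanSpace ℝ (Fin d) → ℝ)
    (F : EuclideanSpace ℝ (Fin d) → ℝ)
    (hF : ∀ z, F z = (1 / (m : ℝ)) * ∑ i, f i z)
    {L : ℝ} (hL : 0 < L)
    (hdiff : ∀ i, Differentiable ℝ (f i))
    (hsmooth : ∀ i, LipschitzWith L.toNNReal (gradient (f i)))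
    (a b : EuclideanSpace ℝ (Fin d)) :
    ‖gradient F a - gradient F b‖ ≤ L * ‖a - b‖ := by
  have hm' : (0 : ℝ) < (m : ℝ) := by exact_mod_cast hm
  rw [fed_gradF_eq f F hF hdiff, fed_gradF_eq f F hF hdiff, ← smul_sub,
    ← Finset.sum_sub_distrib, norm_smul]
  have hterm : ∀ i : Fin m, ‖gradient (f i) a - gradient (f i) b‖ ≤ L * ‖a - b‖ := by
    intro i
    have := (hsmooth i).dist_le_mul a b
    rwa [dist_eq_norm, dist_eq_norm, Real.coe_toNNReal L hL.le] at this
  calc ‖(1 : ℝ) / m‖ * ‖∑ i, (gradient (f i) a - gradient (f i) b)‖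
      ≤ ‖(1 : ℝ) / m‖ * ∑ i : Fin m, ‖gradient (f i) a - gradient (f i) b‖ :=
        mul_le_mul_of_nonneg_left (norm_sum_le _ _) (norm_nonneg _)
    _ ≤ ‖(1 : ℝ) / m‖ * ∑ _i : Fin m, L * ‖a - b‖ :=
        mul_le_mul_of_nonneg_left (Finset.sum_le_sum fun i _ => hterm i) (norm_nonneg _)
    _ = L * ‖a - b‖ := by
        rw [Finset.sum_const, Finset.card_univ, Fintype.card_fin]
        rw [Real.norm_eq_abs, abs_of_pos (by positivity)]
        field_simp
        rw [nsmul_eq_mul]; ring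

lemma fed_arith {L e G R : ℝ} (hL : 0 < L) (he : 0 < e) (hLe : e * L = 1 / 26)
    (hG : 0 ≤ G) (hR0 : 0 ≤ R) (hR : 13 * R ≤ e * G) :
    -(e * G ^ 2) + G * R + L * (e * G + R) ^ 2 ≤ -(e / 2 * G ^ 2) := by
  nlinarith [mul_le_mul_of_nonneg_right hR hG, mul_le_mul_of_nonneg_left hR (mul_nonneg hL.le hR0),
    mul_nonneg (mul_nonneg hL.le hR0) hR0, mul_nonneg hR0 hG, sq_nonneg G, mul_pos he hL,
    mul_nonneg he.le (mul_nonneg hG hG)]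

end FedLinHelpers

open InnerProductSpace

set_option maxHeartbeats 1000000

/-- Theorem 5 (non-convex case with systems heterogeneity): FedLin with
client-specific numbers of local steps `τᵢ ≥ 1` and step sizes `ηᵢ = 1/(26Lτᵢ)`
drives the minimum gradient norm to zero at rate `O(1/T)`. -/
theorem fedlin_convergence_nonconvex_systems_heterogeneity {d m : ℕ} (hm : 0 < m)
    (f : Fin m → EuclideanSpace ℝ (Fin d) → ℝ)
    (F : EuclideanSpace ℝ (Fin d) → ℝ)
    (hF : ∀ z, F z = (1 / (m : ℝ)) * ∑ i, f i z)
    (L : ℝ) (hL : 0 < L)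
    (hdiff : ∀ i, Differentiable ℝ (f i))
    (hsmooth : ∀ i, LipschitzWith L.toNNReal (gradient (f i)))
    (τ : Fin m → ℕ) (hτ : ∀ i, 1 ≤ τ i)
    (η : Fin m → ℝ) (hη : ∀ i, η i = 1 / (26 * L * (τ i : ℝ)))
    (xbar : ℕ → EuclideanSpace ℝ (Fin d))
    (x : ℕ → Fin m → ℕ → EuclideanSpace ℝ (Fin d))
    (hx0 : ∀ t, 1 ≤ t → ∀ i, x t i 0 = xbar t)
    (hrec : ∀ t, 1 ≤ t → ∀ i, ∀ ℓ < τ i, x t i (ℓ + 1) =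
      x t i ℓ - η i • (gradient (f i) (x t i ℓ) - gradient (f i) (xbar t)
        + gradient F (xbar t)))
    (havg : ∀ t, 1 ≤ t → xbar (t + 1) = (1 / (m : ℝ)) • ∑ i, x t i (τ i))
    (T : ℕ) (hT : 1 ≤ T) :
    ∃ t, 1 ≤ t ∧ t ≤ T ∧
      ‖gradient F (xbar t)‖ ^ 2 ≤ (52 * L / (T : ℝ)) * (F (xbar 1) - F (xbar (T + 1))) := by
  have hmR : (0 : ℝ) < (m : ℝ) := by exact_mod_cast hm
  have hdF : Differentiable ℝ F := fun z => (fed_gradF f F hF hdiff z).differentiableAt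
  have hlipF : ∀ a b, ‖gradient F a - gradient F b‖ ≤ L * ‖a - b‖ :=
    fed_gradF_lip hm f F hF hL hdiff hsmooth
  have hτR : ∀ i, (0 : ℝ) < (τ i : ℝ) := fun i => by exact_mod_cast hτ i
  have hηpos : ∀ i, 0 < η i := fun i => by
    rw [hη]; have := hτR i; positivity
  have hητ : ∀ i, η i * (τ i : ℝ) = 1 / (26 * L) := fun i => by
    have h1 : ((τ i : ℝ)) ≠ 0 := (hτR i).ne'
    have h2 : L ≠ 0 := hL.ne'
    rw [hη]; field_simp
  set e : ℝ := 1 / (26 * L) with he_def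
  have he : 0 < e := by positivity
  have heL : e * L = 1 / 26 := by rw [he_def]; field_simp
  -- Per-round descent
  have key : ∀ t, 1 ≤ t →
      F (xbar (t + 1)) ≤ F (xbar t) - e / 2 * ‖gradient F (xbar t)‖ ^ 2 := by
    intro t ht
    set g : EuclideanSpace ℝ (Fin d) := gradient F (xbar t) with hg_def
    set G : ℝ := ‖g‖ with hG_def
    have hG : 0 ≤ G := norm_nonneg g
    have hlipi : ∀ (i : Fin m) (a b : EuclideanSpace ℝ (Fin d)),
        ‖gradient (f i) a - gradient (f i) b‖ ≤ L * ‖a - b‖ := by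
      intro i a b
      have := (hsmooth i).dist_le_mul a b
      rwa [dist_eq_norm, dist_eq_norm, Real.coe_toNNReal L hL.le] at this
    -- drift bound
    have drift : ∀ (i : Fin m) (ℓ : ℕ), ℓ ≤ τ i →
        ‖x t i ℓ - xbar t‖ ≤ 2 * (ℓ : ℝ) * η i * G := by
      intro i ℓ
      induction ℓ with
      | zero => intro _; rw [hx0 t ht i]; simp
      | succ ℓ ih =>
        intro hℓ
        have hℓ' : ℓ < τ i := hℓ
        have ihe := ih hℓ'.le
        rw [hrec t ht i ℓ hℓ', ← hg_def, sub_right_comm]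
        have hn1 : ‖x t i ℓ - xbar t -
            η i • (gradient (f i) (x t i ℓ) - gradient (f i) (xbar t) + g)‖ ≤
            ‖x t i ℓ - xbar t‖ +
            η i * (‖gradient (f i) (x t i ℓ) - gradient (f i) (xbar t)‖ + G) := by
          calc _ ≤ ‖x t i ℓ - xbar t‖ +
                ‖η i • (gradient (f i) (x t i ℓ) - gradient (f i) (xbar t) + g)‖ :=
              norm_sub_le _ _
            _ ≤ _ := by
              rw [norm_smul, Real.norm_eq_abs, abs_of_pos (hηpos i)]
              have := norm_add_le (gradient (f i) (x t i ℓ) - gradient (f i) (xbar t)) g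
              nlinarith [hηpos i]
        have hδ : ‖gradient (f i) (x t i ℓ) - gradient (f i) (xbar t)‖ ≤
            L * (2 * (ℓ : ℝ) * η i * G) :=
          le_trans (hlipi i _ _) (mul_le_mul_of_nonneg_left ihe hL.le)
        have hℓτ : (ℓ : ℝ) ≤ (τ i : ℝ) := by exact_mod_cast hℓ'.le
        have hηLτ : η i * L * (τ i : ℝ) = 1 / 26 := by
          rw [show η i * L * (τ i : ℝ) = η i * (τ i : ℝ) * L by ring, hητ i, heL]
        push_cast
        nlinarith [hηpos i, mul_pos (hηpos i) hL, mul_nonneg (mul_nonneg (hηpos i).le hL.le) hG,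
          mul_le_mul_of_nonneg_left hδ (hηpos i).le,
          mul_le_mul_of_nonneg_left hℓτ (mul_nonneg (mul_nonneg (hηpos i).le hL.le)
            (mul_nonneg (mul_nonneg (by norm_num : (0:ℝ) ≤ 2) (hηpos i).le) hG))]
    -- expansion of local iterates
    have expand : ∀ (i : Fin m) (ℓ : ℕ), ℓ ≤ τ i →
        x t i ℓ = xbar t - η i • ∑ j ∈ Finset.range ℓ,
          (gradient (f i) (x t i j) - gradient (f i) (xbar t) + g) := by
      intro i ℓ
      induction ℓ with
      | zero => intro _; simp [hx0 t ht i]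
      | succ ℓ ih =>
        intro hℓ
        rw [hrec t ht i ℓ hℓ, ← hg_def, Finset.sum_range_succ, ih (Nat.le_of_lt hℓ)]
        module
    set D : Fin m → EuclideanSpace ℝ (Fin d) := fun i =>
      ∑ j ∈ Finset.range (τ i), (gradient (f i) (x t i j) - gradient (f i) (xbar t)) with hD_def
    set r : EuclideanSpace ℝ (Fin d) := (1 / (m : ℝ)) • ∑ i, η i • D i with hr_def
    have hcancel : ∀ v : EuclideanSpace ℝ (Fin d), (1 / (m : ℝ)) • ((m : ℕ) • v) = v := by
      intro v
      rw [← Nat.cast_smul_eq_nsmul ℝ, smul_smul, one_div, inv_mul_cancel₀ (ne_of_gt hmR), one_smul]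
    have hSi : ∀ i : Fin m, x t i (τ i) = xbar t - (η i • D i + e • g) := by
      intro i
      rw [expand i (τ i) le_rfl]
      congr 1
      have hsplit : ∑ j ∈ Finset.range (τ i),
          (gradient (f i) (x t i j) - gradient (f i) (xbar t) + g) = D i + (τ i : ℕ) • g := by
        rw [hD_def, Finset.sum_add_distrib, Finset.sum_const, Finset.card_range]
      rw [hsplit, smul_add, ← Nat.cast_smul_eq_nsmul ℝ, smul_smul, hητ i]
    have hdelta : xbar (t + 1) - xbar t = -(e • g) - r := by
      rw [havg t ht]
      have hsum : ∑ i, x t i (τ i) =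
          (m : ℕ) • xbar t - (∑ i, η i • D i + (m : ℕ) • (e • g)) := by
        calc ∑ i, x t i (τ i) = ∑ i : Fin m, (xbar t - (η i • D i + e • g)) :=
            Finset.sum_congr rfl (fun i _ => hSi i)
          _ = (m : ℕ) • xbar t - (∑ i, η i • D i + (m : ℕ) • (e • g)) := by
            rw [Finset.sum_sub_distrib, Finset.sum_const, Finset.card_univ, Fintype.card_fin,
              Finset.sum_add_distrib, Finset.sum_const, Finset.card_univ, Fintype.card_fin]
      rw [hsum, smul_sub, smul_add, hcancel, hcancel, ← hr_def]
      abel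
    have hDi : ∀ i : Fin m, ‖η i • D i‖ ≤ e * G / 13 := by
      intro i
      have hterm : ∀ j ∈ Finset.range (τ i),
          ‖gradient (f i) (x t i j) - gradient (f i) (xbar t)‖ ≤ 2 * L * (η i * (τ i : ℝ)) * G := by
        intro j hj
        have hjτ : (j : ℝ) ≤ (τ i : ℝ) := by
          exact_mod_cast (Finset.mem_range.mp hj).le
        calc ‖gradient (f i) (x t i j) - gradient (f i) (xbar t)‖
            ≤ L * ‖x t i j - xbar t‖ := hlipi i _ _
          _ ≤ L * (2 * (j : ℝ) * η i * G) :=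
              mul_le_mul_of_nonneg_left (drift i j (Finset.mem_range.mp hj).le) hL.le
          _ ≤ 2 * L * (η i * (τ i : ℝ)) * G := by
              nlinarith [hηpos i, mul_nonneg (mul_nonneg hL.le (hηpos i).le) hG]
      have hDnorm : ‖D i‖ ≤ (τ i : ℝ) * (2 * L * (η i * (τ i : ℝ)) * G) := by
        calc ‖D i‖ ≤ ∑ j ∈ Finset.range (τ i),
              ‖gradient (f i) (x t i j) - gradient (f i) (xbar t)‖ := norm_sum_le _ _
          _ ≤ ∑ _j ∈ Finset.range (τ i), 2 * L * (η i * (τ i : ℝ)) * G :=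
              Finset.sum_le_sum hterm
          _ = (τ i : ℝ) * (2 * L * (η i * (τ i : ℝ)) * G) := by
              rw [Finset.sum_const, Finset.card_range, nsmul_eq_mul]
      rw [norm_smul, Real.norm_eq_abs, abs_of_pos (hηpos i)]
      have h1 : η i * ‖D i‖ ≤ η i * ((τ i : ℝ) * (2 * L * (η i * (τ i : ℝ)) * G)) :=
        mul_le_mul_of_nonneg_left hDnorm (hηpos i).le
      have h2 : η i * ((τ i : ℝ) * (2 * L * (η i * (τ i : ℝ)) * G)) = e * G / 13 := by
        have hLne : L ≠ 0 := hL.ne'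
        rw [show η i * ((τ i : ℝ) * (2 * L * (η i * (τ i : ℝ)) * G)) =
          (η i * (τ i : ℝ)) * (η i * (τ i : ℝ)) * (2 * L * G) by ring, hητ i, he_def]
        field_simp
        ring
      linarith
    have hrnorm : ‖r‖ ≤ e * G / 13 := by
      rw [hr_def, norm_smul, Real.norm_eq_abs, abs_of_pos (by positivity : (0:ℝ) < 1 / (m:ℝ))]
      calc (1 / (m : ℝ)) * ‖∑ i, η i • D i‖
          ≤ (1 / (m : ℝ)) * ∑ i : Fin m, ‖η i • D i‖ :=
            mul_le_mul_of_nonneg_left (norm_sum_le _ _) (by positivity)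
        _ ≤ (1 / (m : ℝ)) * ∑ _i : Fin m, e * G / 13 :=
            mul_le_mul_of_nonneg_left (Finset.sum_le_sum fun i _ => hDi i) (by positivity)
        _ = e * G / 13 := by
            rw [Finset.sum_const, Finset.card_univ, Fintype.card_fin, nsmul_eq_mul]
            field_simp
    -- descent
    have hdesc := fed_descent hdF hL.le hlipF (xbar t) (xbar (t + 1))
    rw [hdelta] at hdesc
    have hinner : ⟪g, -(e • g) - r⟫_ℝ ≤ -(e * G ^ 2) + G * ‖r‖ := by
      rw [inner_sub_right, inner_neg_right, real_inner_smul_right, real_inner_self_eq_norm_sq,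
        ← hG_def]
      have := abs_real_inner_le_norm g r
      have h2 : -⟪g, r⟫_ℝ ≤ G * ‖r‖ := by
        rw [hG_def]
        cases abs_le.mp this with
        | intro hlo hhi => linarith
      linarith
    have hΔnorm : ‖-(e • g) - r‖ ≤ e * G + ‖r‖ := by
      calc ‖-(e • g) - r‖ ≤ ‖-(e • g)‖ + ‖r‖ := norm_sub_le _ _
        _ = e * G + ‖r‖ := by
            rw [norm_neg, norm_smul, Real.norm_eq_abs, abs_of_pos he, hG_def]
    have hΔsq : L * ‖-(e • g) - r‖ ^ 2 ≤ L * (e * G + ‖r‖) ^ 2 :=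
      mul_le_mul_of_nonneg_left (pow_le_pow_left₀ (norm_nonneg _) hΔnorm 2) hL.le
    have hR0 : 0 ≤ ‖r‖ := norm_nonneg r
    have hRb : 13 * ‖r‖ ≤ e * G := by linarith
    have hA := fed_arith hL he heL hG hR0 hRb
    have hFg : ⟪gradient F (xbar t), -(e • g) - r⟫_ℝ = ⟪g, -(e • g) - r⟫_ℝ := by rw [hg_def]
    rw [hFg] at hdesc
    linarith
  -- telescoping sum
  have htel : ∑ t ∈ Finset.Icc 1 T, (F (xbar t) - F (xbar (t + 1))) =
      F (xbar 1) - F (xbar (T + 1)) := by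
    rw [← Finset.Ico_add_one_right_eq_Icc, Finset.sum_Ico_eq_sum_range]
    have h1 : T + 1 - 1 = T := by omega
    rw [h1]
    have := Finset.sum_range_sub' (fun i => F (xbar (1 + i))) T
    simp only [Nat.add_zero] at this
    calc ∑ i ∈ Finset.range T, (F (xbar (1 + i)) - F (xbar (1 + i + 1)))
        = ∑ i ∈ Finset.range T, ((fun i => F (xbar (1 + i))) i - (fun i => F (xbar (1 + i))) (i + 1)) := by
          apply Finset.sum_congr rfl
          intro i _
          have : 1 + i + 1 = 1 + (i + 1) := by omega
          rw [this]
      _ = F (xbar (1 + 0)) - F (xbar (1 + T)) := Finset.sum_range_sub' _ T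
      _ = F (xbar 1) - F (xbar (T + 1)) := by rw [Nat.add_comm 1 T]
  have hsumkey : ∑ t ∈ Finset.Icc 1 T, (e / 2 * ‖gradient F (xbar t)‖ ^ 2) ≤
      F (xbar 1) - F (xbar (T + 1)) := by
    rw [← htel]
    apply Finset.sum_le_sum
    intro t htmem
    have h1t := (Finset.mem_Icc.mp htmem).1
    have := key t h1t
    linarith
  -- extract the minimizer
  obtain ⟨t0, ht0, hmin⟩ := Finset.exists_min_image (Finset.Icc 1 T)
    (fun t => ‖gradient F (xbar t)‖ ^ 2) ⟨1, Finset.mem_Icc.mpr ⟨le_refl 1, hT⟩⟩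
  obtain ⟨h1t0, ht0T⟩ := Finset.mem_Icc.mp ht0
  refine ⟨t0, h1t0, ht0T, ?_⟩
  have hcard : (Finset.Icc 1 T).card = T := by rw [Nat.card_Icc]; omega
  have hTmin : (T : ℝ) * ‖gradient F (xbar t0)‖ ^ 2 ≤
      ∑ t ∈ Finset.Icc 1 T, ‖gradient F (xbar t)‖ ^ 2 := by
    have := Finset.card_nsmul_le_sum (Finset.Icc 1 T)
      (fun t => ‖gradient F (xbar t)‖ ^ 2) (‖gradient F (xbar t0)‖ ^ 2) hmin
    rw [hcard, nsmul_eq_mul] at this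
    exact_mod_cast this
  have hmulsum : e / 2 * ∑ t ∈ Finset.Icc 1 T, ‖gradient F (xbar t)‖ ^ 2 ≤
      F (xbar 1) - F (xbar (T + 1)) := by
    rw [Finset.mul_sum]; exact hsumkey
  have hsum2 : ∑ t ∈ Finset.Icc 1 T, ‖gradient F (xbar t)‖ ^ 2 ≤
      52 * L * (F (xbar 1) - F (xbar (T + 1))) := by
    have h52 : e / 2 * (52 * L) = 1 := by
      rw [he_def]; field_simp; ring
    have hmul := mul_le_mul_of_nonneg_left hmulsum (by positivity : (0:ℝ) ≤ 52 * L)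
    set S := ∑ t ∈ Finset.Icc 1 T, ‖gradient F (xbar t)‖ ^ 2 with hS_def
    have h1 : 52 * L * (e / 2 * S) = e / 2 * (52 * L) * S := by ring
    rw [h1, h52, one_mul] at hmul
    exact hmul
  have hTpos : (0 : ℝ) < (T : ℝ) := by exact_mod_cast hT
  rw [div_mul_eq_mul_div, le_div_iff₀ hTpos]
  nlinarith [hTmin, hsum2]
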